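/- Let W be a standard Brownian motion, b, c > 0 with 2b > c, and S ≥ 0. Then the integral ∫_ℝ P(∃ t' ≥ 0 ∀ t ∈ [t', t'+S]: W(t) − bt > x) e^{cx} dx is finite and strictly positive. -/

import Mathlib

open MeasureTheory ProbabilityTheory Set Filter Matrix

/-- A standard one-dimensional Brownian motion. -/
structure IsStandardBM {Ω : Type*} [MeasureSpace Ω] (B : ℝ → Ω → ℝ) : Prop where
  measurable : ∀ t : ℝ, Measurable (B t)
  start : ∀ᵐ ω : Ω, B 0 ω = 0
  cont : ∀ᵐ ω : Ω, Continuous fun t => B t ω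
  incr : ∀ s t : ℝ, 0 ≤ s → s ≤ t →
    Measure.map (fun ω => B t ω - B s ω) (ℙ : Measure Ω) =
      gaussianReal 0 (Real.toNNReal (t - s))
  indep : ∀ (n : ℕ) (ts : Fin (n + 1) → ℝ), Monotone ts →
    iIndepFun
      (fun i : Fin n => fun ω => B (ts i.succ) ω - B (ts i.castSucc) ω)
      (ℙ : Measure Ω)

open Real
open scoped NNReal ENNReal

lemma exp_shuffle (I A B C D : ℝ) (h : A + C = D + B) :
    I * rexp A * rexp C = rexp D * (I * rexp B) := by
  rw [mul_assoc, ← Real.exp_add, h, mul_comm (rexp D), mul_assoc, ← Real.exp_add, add_comm B D]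

lemma gauss_pdf_mul (v : ℝ≥0) (hv : v ≠ 0) (s x : ℝ) :
    gaussianPDFReal 0 v x * Real.exp (s * x) =
      Real.exp ((v : ℝ) * s ^ 2 / 2) * gaussianPDFReal (s * (v : ℝ)) v x := by
  have hv' : (0 : ℝ) < v := by exact_mod_cast pos_iff_ne_zero.2 hv
  unfold gaussianPDFReal
  exact exp_shuffle _ _ _ _ _ (by field_simp; ring)

lemma gauss_exp_integrable (v : ℝ≥0) (s : ℝ) :
    Integrable (fun y => Real.exp (s * y)) (gaussianReal 0 v) := by
  rcases eq_or_ne v 0 with rfl | hv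
  · rw [gaussianReal_zero_var]
    have h1 : Integrable (fun _ : ℝ => rexp (s * 0)) (Measure.dirac (0:ℝ)) := integrable_const _
    exact h1.congr (ae_eq_dirac fun y => rexp (s*y)).symm
  · rw [gaussianReal_of_var_ne_zero _ hv]
    rw [gaussianPDF_def]
    have hmeas : Measurable fun x => (gaussianPDFReal 0 v x).toNNReal :=
      (measurable_gaussianPDFReal 0 v).real_toNNReal
    rw [show (fun x => ENNReal.ofReal (gaussianPDFReal 0 v x)) =
        (fun x => ((gaussianPDFReal 0 v x).toNNReal : ℝ≥0∞)) from rfl]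
    rw [integrable_withDensity_iff_integrable_smul hmeas]
    have : (fun x => (gaussianPDFReal 0 v x).toNNReal • Real.exp (s * x)) =
        fun x => Real.exp ((v : ℝ) * s ^ 2 / 2) * gaussianPDFReal (s * (v : ℝ)) v x := by
      funext x
      rw [NNReal.smul_def, smul_eq_mul, Real.coe_toNNReal _ (gaussianPDFReal_nonneg 0 v x),
        gauss_pdf_mul v hv]
    rw [this]
    exact (integrable_gaussianPDFReal _ _).const_mul _

lemma gauss_exp_integral (v : ℝ≥0) (s : ℝ) :
    ∫ y, Real.exp (s * y) ∂(gaussianReal 0 v) = Real.exp ((v : ℝ) * s ^ 2 / 2) := by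
  rcases eq_or_ne v 0 with rfl | hv
  · rw [gaussianReal_zero_var, integral_dirac]
    simp
  · rw [gaussianReal_of_var_ne_zero _ hv, gaussianPDF_def]
    have hmeas : Measurable fun x => (gaussianPDFReal 0 v x).toNNReal :=
      (measurable_gaussianPDFReal 0 v).real_toNNReal
    rw [show (fun x => ENNReal.ofReal (gaussianPDFReal 0 v x)) =
        (fun x => ((gaussianPDFReal 0 v x).toNNReal : ℝ≥0∞)) from rfl]
    rw [integral_withDensity_eq_integral_smul hmeas]
    have : (fun x => (gaussianPDFReal 0 v x).toNNReal • Real.exp (s * x)) =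
        fun x => Real.exp ((v : ℝ) * s ^ 2 / 2) * gaussianPDFReal (s * (v : ℝ)) v x := by
      funext x
      rw [NNReal.smul_def, smul_eq_mul, Real.coe_toNNReal _ (gaussianPDFReal_nonneg 0 v x),
        gauss_pdf_mul v hv]
    rw [this, integral_const_mul, integral_gaussianPDFReal_eq_one _ hv, mul_one]

lemma incr_indep_nat {Ω : Type*} [MeasureSpace Ω] {W : ℝ → Ω → ℝ} (hW : IsStandardBM W)
    (t : ℕ → ℝ) (ht : Monotone t) :
    iIndepFun
      (fun k : ℕ => fun ω => W (t (k + 1)) ω - W (t k) ω) (ℙ : Measure Ω) := by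
  rw [iIndepFun_iff_measure_inter_preimage_eq_mul]
  intro S sets hsets
  set n := S.sup id + 1 with hn
  have hSn : ∀ m ∈ S, m < n := fun m hm => Nat.lt_succ_of_le (Finset.le_sup (f := id) hm)
  have hts : Monotone (fun i : Fin (n + 1) => t i.val) := fun a b hab => ht hab
  have hind := hW.indep n _ hts
  rw [iIndepFun_iff_measure_inter_preimage_eq_mul] at hind
  have key := hind (S.attachFin hSn) (sets := fun i : Fin n => sets i.val)
    (fun i hi => hsets i.val ((Finset.mem_attachFin hSn).mp hi))
  have hfun : ∀ i : Fin n, (fun ω => W ((fun j : Fin (n+1) => t j.val) i.succ) ω -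
      W ((fun j : Fin (n+1) => t j.val) i.castSucc) ω) =
      fun ω => W (t (i.val + 1)) ω - W (t i.val) ω := by
    intro i; simp [Fin.val_succ, Fin.coe_castSucc]
  have hset : (⋂ i ∈ S.attachFin hSn,
      (fun ω => W ((fun j : Fin (n+1) => t j.val) i.succ) ω -
        W ((fun j : Fin (n+1) => t j.val) i.castSucc) ω) ⁻¹' sets i.val) =
      ⋂ k ∈ S, (fun ω => W (t (k + 1)) ω - W (t k) ω) ⁻¹' sets k := by
    ext ω
    simp only [Set.mem_iInter, Finset.mem_attachFin, hfun]
    constructor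
    · intro h k hk
      exact h ⟨k, hSn k hk⟩ hk
    · intro h i hi
      exact h i.val hi
  have hprod : (∏ i ∈ S.attachFin hSn, ℙ ((fun ω => W ((fun j : Fin (n+1) => t j.val) i.succ) ω -
        W ((fun j : Fin (n+1) => t j.val) i.castSucc) ω) ⁻¹' sets i.val)) =
      ∏ k ∈ S, ℙ ((fun ω => W (t (k + 1)) ω - W (t k) ω) ⁻¹' sets k) := by
    refine Finset.prod_bij (fun i _ => i.val) (fun i hi => (Finset.mem_attachFin hSn).mp hi)
      (fun a _ b _ h => Fin.val_injective h)
      (fun k hk => ⟨⟨k, hSn k hk⟩, (Finset.mem_attachFin hSn).mpr hk, rfl⟩) ?_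
    intro i _
    rw [hfun]
  rw [← hset, ← hprod]
  exact key

lemma grid_bound {Ω : Type*} [MeasureSpace Ω] [IsProbabilityMeasure (ℙ : Measure Ω)]
    {W : ℝ → Ω → ℝ} (hW : IsStandardBM W) {b : ℝ} (hb : 0 < b)
    (t : ℕ → ℝ) (ht : Monotone t) (ht0 : t 0 = 0) (x : ℝ) (n : ℕ) :
    ℙ {ω | W 0 ω = 0 ∧ ∃ i ≤ n, W (t (i + 1)) ω - b * t (i + 1) > x} ≤
      ENNReal.ofReal (Real.exp (-(2 * b * x))) := by
  have ht0' : ∀ k, 0 ≤ t k := fun k => ht0 ▸ ht (Nat.zero_le k)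
  -- increments: integrability and expectation of exponentials
  have hmeasD : ∀ i j : ℕ, Measurable (fun ω => W (t j) ω - W (t i) ω) :=
    fun i j => (hW.measurable _).sub (hW.measurable _)
  have hlaw : ∀ i j : ℕ, i ≤ j → Measure.map (fun ω => W (t j) ω - W (t i) ω) (ℙ : Measure Ω) =
      gaussianReal 0 (Real.toNNReal (t j - t i)) := fun i j hij => hW.incr _ _ (ht0' i) (ht hij)
  have hIC : ∀ i j : ℕ, i ≤ j → ∀ C : ℝ,
      Integrable (fun ω => rexp (2 * b * (W (t j) ω - W (t i) ω) - C)) (ℙ : Measure Ω) ∧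
      ∫ ω, rexp (2 * b * (W (t j) ω - W (t i) ω) - C) ∂(ℙ : Measure Ω) =
        rexp (2 * b ^ 2 * (t j - t i) - C) := by
    intro i j hij C
    have hg : Integrable (fun y => rexp (2 * b * y)) (gaussianReal 0 (Real.toNNReal (t j - t i))) :=
      gauss_exp_integrable _ _
    have hgi := gauss_exp_integral (Real.toNNReal (t j - t i)) (2 * b)
    rw [← hlaw i j hij] at hg hgi
    have hgm : AEStronglyMeasurable (fun y : ℝ => rexp (2 * b * y))
        (Measure.map (fun ω => W (t j) ω - W (t i) ω) (ℙ : Measure Ω)) :=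
      (Real.measurable_exp.comp (measurable_const_mul (2 * b))).aestronglyMeasurable
    have hInt0 : Integrable (fun ω => rexp (2 * b * (W (t j) ω - W (t i) ω))) (ℙ : Measure Ω) :=
      (integrable_map_measure hgm (hmeasD i j).aemeasurable).mp hg
    have hE0 : ∫ ω, rexp (2 * b * (W (t j) ω - W (t i) ω)) ∂(ℙ : Measure Ω) =
        rexp (2 * b ^ 2 * (t j - t i)) := by
      have hEmap : ∫ ω, rexp (2 * b * (W (t j) ω - W (t i) ω)) ∂(ℙ : Measure Ω) =
          ∫ y, rexp (2 * b * y) ∂(Measure.map (fun ω => W (t j) ω - W (t i) ω) (ℙ : Measure Ω)) :=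
        (integral_map (hmeasD i j).aemeasurable hgm).symm
      rw [hEmap, hgi]
      rw [Real.coe_toNNReal _ (sub_nonneg.2 (ht hij))]
      ring_nf
    have hfun : (fun ω => rexp (2 * b * (W (t j) ω - W (t i) ω) - C)) =
        fun ω => rexp (2 * b * (W (t j) ω - W (t i) ω)) * rexp (-C) := by
      funext ω; rw [← Real.exp_add]; ring_nf
    constructor
    · rw [hfun]; exact hInt0.mul_const _
    · rw [hfun, integral_mul_const, hE0, ← Real.exp_add]; ring_nf
  -- the multiplicative increments ξ and the martingale M
  set ξ : ℕ → Ω → ℝ := fun k ω =>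
    rexp (2 * b * (W (t (k + 1)) ω - W (t k) ω) - 2 * b ^ 2 * (t (k + 1) - t k)) with hξdef
  have hmeasξ : ∀ k, Measurable (ξ k) := fun k =>
    Real.measurable_exp.comp (((hmeasD k (k + 1)).const_mul _).sub_const _)
  have hsm : ∀ k, StronglyMeasurable (ξ k) := fun k => (hmeasξ k).stronglyMeasurable
  have hIntξ : ∀ k, Integrable (ξ k) (ℙ : Measure Ω) := fun k =>
    (hIC k (k + 1) (Nat.le_succ k) _).1
  have hEξ : ∀ k, ∫ ω, ξ k ω ∂(ℙ : Measure Ω) = 1 := by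
    intro k
    rw [show ∫ ω, ξ k ω ∂(ℙ : Measure Ω) = rexp (2 * b ^ 2 * (t (k+1) - t k) -
      2 * b ^ 2 * (t (k+1) - t k)) from (hIC k (k + 1) (Nat.le_succ k) _).2]
    rw [sub_self, Real.exp_zero]
  have hindepξ : iIndepFun ξ (ℙ : Measure Ω) := by
    have := (incr_indep_nat hW t ht).comp
      (fun k => fun y : ℝ => rexp (2 * b * y - 2 * b ^ 2 * (t (k + 1) - t k)))
      (fun k => Real.measurable_exp.comp ((measurable_const_mul _).sub_const _))
    exact this
  set ℱ : Filtration ℕ (inferInstance : MeasurableSpace Ω) := Filtration.natural ξ hsm with hℱdef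
  set M : ℕ → Ω → ℝ := fun k ω => ∏ j ∈ Finset.range (k + 1), ξ j ω with hMdef
  have hM_eq : ∀ k, M k = fun ω =>
      rexp (2 * b * (W (t (k + 1)) ω - W (t 0) ω) - 2 * b ^ 2 * (t (k + 1) - t 0)) := by
    intro k
    funext ω
    rw [hMdef]
    dsimp only
    rw [← Real.exp_sum]
    congr 1
    rw [Finset.sum_sub_distrib, ← Finset.mul_sum, ← Finset.mul_sum,
      Finset.sum_range_sub (fun i => W (t i) ω), Finset.sum_range_sub (fun i => t i)]
  have hIntM : ∀ k, Integrable (M k) (ℙ : Measure Ω) := by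
    intro k
    rw [hM_eq k]
    exact (hIC 0 (k + 1) (Nat.zero_le _) _).1
  have hEM : ∀ k, ∫ ω, M k ω ∂(ℙ : Measure Ω) = 1 := by
    intro k
    rw [hM_eq k]
    rw [(hIC 0 (k + 1) (Nat.zero_le _) _).2, sub_self, Real.exp_zero]
  have hadapted : StronglyAdapted ℱ M := by
    intro k
    rw [show M k = ∏ j ∈ Finset.range (k + 1), ξ j from funext fun ω => by
      simp [hMdef, Finset.prod_apply]]
    refine Finset.stronglyMeasurable_prod _ (fun j hj => ?_)
    exact (Filtration.stronglyAdapted_natural hsm j).mono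
      (ℱ.mono (Finset.mem_range_succ_iff.mp hj))
  have hmart : Martingale M ℱ (ℙ : Measure Ω) := by
    refine martingale_nat hadapted hIntM (fun i => ?_)
    have h1 : M (i + 1) = M i * ξ (i + 1) := by
      funext ω
      exact Finset.prod_range_succ _ _
    have h2 := condExp_mul_of_stronglyMeasurable_left (hadapted i)
      (by rw [← h1]; exact hIntM (i + 1)) (hIntξ (i + 1))
    have h3 := hindepξ.condExp_natural_ae_eq_of_lt hsm (Nat.lt_add_one i)
    rw [h1]
    refine (EventuallyEq.trans h2 ?_).symm
    filter_upwards [h3] with ω hω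
    simp only [Pi.mul_apply, hℱdef, hω, hEξ (i + 1), mul_one]
  have hnonneg : (0 : ℕ → Ω → ℝ) ≤ M := fun k ω =>
    Finset.prod_nonneg fun j _ => (Real.exp_pos _).le
  set ε : ℝ≥0 := (rexp (2 * b * x)).toNNReal with hεdef
  have hkey := maximal_ineq hmart.submartingale hnonneg (ε := ε) n
  have hεcoe : ((ε : ℝ≥0) : ℝ) = rexp (2 * b * x) := Real.coe_toNNReal _ (Real.exp_pos _).le
  -- set inclusion
  have hsubset : {ω | W 0 ω = 0 ∧ ∃ i ≤ n, W (t (i + 1)) ω - b * t (i + 1) > x} ⊆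
      {ω | (ε : ℝ) ≤ (Finset.range (n + 1)).sup' Finset.nonempty_range_add_one fun k => M k ω} := by
    rintro ω ⟨h0, i, hin, hgt⟩
    have hMi : M i ω = rexp (2 * b * W (t (i + 1)) ω - 2 * b ^ 2 * t (i + 1)) := by
      rw [hM_eq i]
      dsimp only
      rw [ht0, h0, sub_zero, sub_zero]
    have hle : (ε : ℝ) ≤ M i ω := by
      rw [hεcoe, hMi]
      apply Real.exp_le_exp.mpr
      nlinarith [hgt, hb]
    exact le_trans hle (Finset.le_sup' (f := fun k => M k ω)
      (Finset.mem_range_succ_iff.mpr hin))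
  have hmono := measure_mono (μ := (ℙ : Measure Ω)) hsubset
  -- bound the RHS of Doob
  have hRHS : ENNReal.ofReal (∫ ω in {ω | (ε : ℝ) ≤
      (Finset.range (n + 1)).sup' Finset.nonempty_range_add_one fun k => M k ω}, M n ω ∂(ℙ : Measure Ω))
      ≤ 1 := by
    have h1 : ∫ ω in {ω | (ε : ℝ) ≤
        (Finset.range (n + 1)).sup' Finset.nonempty_range_add_one fun k => M k ω}, M n ω ∂(ℙ : Measure Ω)
        ≤ ∫ ω, M n ω ∂(ℙ : Measure Ω) :=
      setIntegral_le_integral (hIntM n) (Eventually.of_forall fun ω => hnonneg n ω)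
    calc ENNReal.ofReal _ ≤ ENNReal.ofReal (∫ ω, M n ω ∂(ℙ : Measure Ω)) :=
          ENNReal.ofReal_le_ofReal h1
      _ = 1 := by rw [hEM n]; exact ENNReal.ofReal_one
  have hμε : (ε : ℝ≥0∞) * ℙ {ω | (ε : ℝ) ≤
      (Finset.range (n + 1)).sup' Finset.nonempty_range_add_one fun k => M k ω} ≤ 1 := by
    have h2 := le_trans hkey hRHS
    exact h2
  have hfinal : ℙ {ω | (ε : ℝ) ≤
      (Finset.range (n + 1)).sup' Finset.nonempty_range_add_one fun k => M k ω} ≤ (ε : ℝ≥0∞)⁻¹ :=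
    ENNReal.le_inv_iff_mul_le.mpr (by rw [mul_comm]; exact hμε)
  refine le_trans (le_trans hmono hfinal) ?_
  have : (ε : ℝ≥0∞) = ENNReal.ofReal (rexp (2 * b * x)) := rfl
  rw [this, ← ENNReal.ofReal_inv_of_pos (Real.exp_pos _), ← Real.exp_neg]

lemma sup_bound {Ω : Type*} [MeasureSpace Ω] [IsProbabilityMeasure (ℙ : Measure Ω)]
    {W : ℝ → Ω → ℝ} (hW : IsStandardBM W) {b : ℝ} (hb : 0 < b) {x : ℝ} (hx : 0 ≤ x) :
    ℙ {ω | ∃ s, 0 ≤ s ∧ W s ω - b * s > x} ≤ ENNReal.ofReal (Real.exp (-(2 * b * x))) := by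
  classical
  set e := Denumerable.eqv ℚ with he
  set q : ℕ → ℝ := fun n => |((e.symm n : ℚ) : ℝ)| with hqdef
  have hq0 : ∀ n, 0 ≤ q n := fun n => abs_nonneg _
  have hq : ∀ r : ℚ, 0 ≤ (r : ℝ) → q (e r) = (r : ℝ) := by
    intro r hr
    rw [hqdef]
    simp only [Equiv.symm_apply_apply]
    exact abs_of_nonneg hr
  set B : ℕ → Set Ω := fun k => {ω | W (q k) ω - b * q k > x} with hBdef
  have step1 : ∀ᵐ ω ∂(ℙ : Measure Ω), ω ∈ {ω | ∃ s, 0 ≤ s ∧ W s ω - b * s > x} →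
      ω ∈ ({ω | W 0 ω = 0} ∩ ⋃ k, B k) := by
    filter_upwards [hW.start, hW.cont] with ω h0 hcont
    rintro ⟨s, hs0, hgt⟩
    refine ⟨h0, ?_⟩
    have hgc : Continuous fun u => W u ω - b * u :=
      hcont.sub (continuous_const.mul continuous_id)
    have hopen : IsOpen {u : ℝ | x < W u ω - b * u} := isOpen_lt continuous_const hgc
    rcases Metric.isOpen_iff.mp hopen s hgt with ⟨δ, hδ, hball⟩
    rcases exists_rat_btwn (lt_add_of_pos_right s hδ) with ⟨r, hr1, hr2⟩
    have hr0 : 0 ≤ (r : ℝ) := le_of_lt (lt_of_le_of_lt hs0 hr1)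
    have hrball : (r : ℝ) ∈ Metric.ball s δ := by
      rw [Metric.mem_ball, Real.dist_eq, abs_of_nonneg (by linarith)]
      linarith
    refine Set.mem_iUnion.mpr ⟨e r, ?_⟩
    have := hball hrball
    simpa [hBdef, hq r hr0] using this
  have step2 : ℙ {ω | ∃ s, 0 ≤ s ∧ W s ω - b * s > x} ≤
      ℙ ({ω | W 0 ω = 0} ∩ ⋃ k, B k) :=
    measure_mono_ae (Filter.Eventually.mono step1 (fun ω h => h))
  refine le_trans step2 ?_
  have hunion : ({ω : Ω | W 0 ω = 0} ∩ ⋃ k, B k) =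
      ⋃ N, ({ω : Ω | W 0 ω = 0} ∩ Set.accumulate B N) := by
    rw [← Set.iUnion_accumulate, Set.inter_iUnion]
  rw [hunion]
  have hmonoAcc : Monotone (fun N => ({ω : Ω | W 0 ω = 0} ∩ Set.accumulate B N)) :=
    fun N N' h => Set.inter_subset_inter_right _ (Set.monotone_accumulate h)
  rw [hmonoAcc.measure_iUnion]
  refine iSup_le fun N => ?_
  -- build the sorted grid from the times q 0, ..., q N and 0
  set F : Finset ℝ := insert 0 ((Finset.range (N + 1)).image q) with hFdef
  have hF0 : (0 : ℝ) ∈ F := Finset.mem_insert_self _ _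
  have hFpos : ∀ y ∈ F, 0 ≤ y := by
    intro y hy
    rcases Finset.mem_insert.mp hy with h | h
    · exact h.ge
    · rcases Finset.mem_image.mp h with ⟨k, _, rfl⟩
      exact hq0 k
  have hcard : 0 < F.card := Finset.card_pos.mpr ⟨0, hF0⟩
  set m : ℕ := F.card - 1 with hmdef
  set oiso := F.orderIsoOfFin rfl with hoiso
  set t : ℕ → ℝ := fun i => (oiso ⟨min i m, by omega⟩ : ℝ) with htdef
  have ht : Monotone t := by
    intro a a' haa'
    exact Subtype.coe_le_coe.mpr (oiso.monotone (Fin.mk_le_mk.mpr (min_le_min_right _ haa')))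
  have htmem : ∀ i, (t i) ∈ F := fun i => (oiso _).2
  have hfirst : ∀ j : Fin F.card, (oiso ⟨0, hcard⟩ : ℝ) ≤ (oiso j : ℝ) := fun j =>
    Subtype.coe_le_coe.mpr (oiso.monotone (Fin.mk_le_mk.mpr (Nat.zero_le _)))
  have htval : ∀ jj : Fin F.card, t jj.val = (oiso jj : ℝ) := by
    intro jj
    have hmin : min jj.val m = jj.val := min_eq_left (by have := jj.isLt; omega)
    exact congrArg (fun z : Fin F.card => (oiso z : ℝ)) (Fin.ext hmin)
  have ht0 : t 0 = 0 := by
    obtain ⟨j, hj⟩ := oiso.surjective ⟨0, hF0⟩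
    have h1 : t 0 = (oiso ⟨0, hcard⟩ : ℝ) := htval ⟨0, hcard⟩
    refine le_antisymm ?_ (hFpos _ (htmem 0))
    rw [h1]
    calc (oiso ⟨0, hcard⟩ : ℝ) ≤ (oiso j : ℝ) := hfirst j
      _ = 0 := by rw [hj]
  have hincl : ({ω : Ω | W 0 ω = 0} ∩ Set.accumulate B N) ⊆
      {ω | W 0 ω = 0 ∧ ∃ i ≤ m, W (t (i + 1)) ω - b * t (i + 1) > x} := by
    rintro ω ⟨h0, hacc⟩
    rw [Set.accumulate_def] at hacc
    rcases Set.mem_iUnion₂.mp hacc with ⟨k, hkN, hk⟩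
    have hqkF : q k ∈ F := Finset.mem_insert_of_mem
      (Finset.mem_image_of_mem q (Finset.mem_range_succ_iff.mpr hkN))
    obtain ⟨j, hj⟩ := oiso.surjective ⟨q k, hqkF⟩
    have hjm : j.val ≤ m := by have := j.isLt; omega
    have hjv : t j.val = q k := by
      rw [htval j, hj]
    rcases Nat.eq_zero_or_pos j.val with hj0 | hjpos
    · exfalso
      have h0' : W 0 ω = 0 := h0
      have hqk0 : q k = 0 := by
        rw [← hjv, hj0, ht0]
      have hgt : W (q k) ω - b * q k > x := hk
      rw [hqk0, h0'] at hgt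
      simp at hgt
      linarith
    · refine ⟨h0, j.val - 1, by omega, ?_⟩
      rw [show j.val - 1 + 1 = j.val by omega, hjv]
      exact hk
  exact le_trans (measure_mono (μ := (ℙ : Measure Ω)) hincl)
    (grid_bound hW hb t ht ht0 x m)

theorem stmt12 {Ω : Type*} [MeasureSpace Ω] [IsProbabilityMeasure (ℙ : Measure Ω)]
    (W : ℝ → Ω → ℝ) (hW : IsStandardBM W) (b c S : ℝ)
    (hb : 0 < b) (hc : 0 < c) (hcb : c < 2 * b) (hS : 0 ≤ S) :
    Integrable (fun x : ℝ =>
        (ℙ {ω : Ω | ∃ t' : ℝ, 0 ≤ t' ∧ ∀ t ∈ Icc t' (t' + S), W t ω - b * t > x}).toReal *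
          Real.exp (c * x)) ∧
      0 < ∫ x : ℝ,
        (ℙ {ω : Ω | ∃ t' : ℝ, 0 ≤ t' ∧ ∀ t ∈ Icc t' (t' + S), W t ω - b * t > x}).toReal *
          Real.exp (c * x) := by
  set f : ℝ → ℝ := fun x =>
    (ℙ {ω : Ω | ∃ t' : ℝ, 0 ≤ t' ∧ ∀ t ∈ Icc t' (t' + S), W t ω - b * t > x}).toReal with hfdef
  have hanti : Antitone f := by
    intro u v huv
    refine ENNReal.toReal_mono (measure_ne_top _ _) (measure_mono ?_)
    rintro ω ⟨t', h1, h2⟩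
    exact ⟨t', h1, fun s hs => lt_of_le_of_lt huv (h2 s hs)⟩
  have hf0 : ∀ x, 0 ≤ f x := fun x => ENNReal.toReal_nonneg
  have hf1 : ∀ x, f x ≤ 1 := by
    intro x
    calc f x ≤ (1 : ℝ≥0∞).toReal := ENNReal.toReal_mono ENNReal.one_ne_top prob_le_one
      _ = 1 := ENNReal.toReal_one
  have hdecay : ∀ x, 0 ≤ x → f x ≤ rexp (-(2 * b * x)) := by
    intro x hx
    have hsub : {ω : Ω | ∃ t' : ℝ, 0 ≤ t' ∧ ∀ t ∈ Icc t' (t' + S), W t ω - b * t > x} ⊆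
        {ω | ∃ s, 0 ≤ s ∧ W s ω - b * s > x} := by
      rintro ω ⟨t', h1, h2⟩
      exact ⟨t', h1, h2 t' ⟨le_refl _, le_add_of_nonneg_right hS⟩⟩
    have hle := le_trans (measure_mono (μ := (ℙ : Measure Ω)) hsub) (sup_bound hW hb hx)
    calc f x ≤ (ENNReal.ofReal (rexp (-(2 * b * x)))).toReal :=
          ENNReal.toReal_mono ENNReal.ofReal_ne_top hle
      _ = rexp (-(2 * b * x)) := ENNReal.toReal_ofReal (Real.exp_pos _).le
  have hmeas : Measurable f := hanti.measurable
  have hg_meas : AEStronglyMeasurable (fun x => f x * rexp (c * x)) volume :=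
    (hmeas.mul (Real.measurable_exp.comp (measurable_id.const_mul c))).aestronglyMeasurable
  -- integrability on (-∞, 0]
  have hInt1 : IntegrableOn (fun x => rexp (c * x)) (Iic (0 : ℝ)) volume := by
    have h1 : IntegrableOn (fun x => rexp (-c * x)) (Ioi (0 : ℝ)) volume :=
      exp_neg_integrableOn_Ioi 0 hc
    have h2 : Integrable ((Ioi (0 : ℝ)).indicator fun x => rexp (-c * x)) volume :=
      h1.integrable_indicator measurableSet_Ioi
    have h3 := h2.comp_neg
    have h4 : (fun x : ℝ => ((Ioi (0 : ℝ)).indicator fun y => rexp (-c * y)) (-x)) =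
        (Iio (0 : ℝ)).indicator fun x => rexp (c * x) := by
      funext x
      by_cases hx : x < 0
      · simp [Set.indicator, hx, neg_pos.mpr hx, neg_mul_neg]
      · simp [Set.indicator, hx, neg_pos, not_lt.mp hx, not_lt]
    rw [h4] at h3
    have h5 : IntegrableOn (fun x => rexp (c * x)) (Iio (0 : ℝ)) volume :=
      (integrable_indicator_iff measurableSet_Iio).mp h3
    exact h5.congr_set_ae Iio_ae_eq_Iic.symm
  have hIntIic : IntegrableOn (fun x => f x * rexp (c * x)) (Iic (0 : ℝ)) volume := by
    refine Integrable.mono hInt1 hg_meas.restrict (Eventually.of_forall fun x => ?_)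
    rw [Real.norm_eq_abs, Real.norm_eq_abs,
      abs_of_nonneg (mul_nonneg (hf0 x) (Real.exp_pos _).le), abs_of_nonneg (Real.exp_pos _).le]
    calc f x * rexp (c * x) ≤ 1 * rexp (c * x) :=
          mul_le_mul_of_nonneg_right (hf1 x) (Real.exp_pos _).le
      _ = rexp (c * x) := one_mul _
  -- integrability on (0, ∞)
  have hInt2 : IntegrableOn (fun x => rexp ((c - 2 * b) * x)) (Ioi (0 : ℝ)) volume := by
    have h1 := exp_neg_integrableOn_Ioi 0 (by linarith : (0 : ℝ) < 2 * b - c)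
    have heq : (fun x : ℝ => rexp (-(2 * b - c) * x)) = fun x => rexp ((c - 2 * b) * x) := by
      funext x; ring_nf
    rwa [heq] at h1
  have hIntIoi : IntegrableOn (fun x => f x * rexp (c * x)) (Ioi (0 : ℝ)) volume := by
    refine Integrable.mono hInt2 hg_meas.restrict ?_
    rw [ae_restrict_iff' measurableSet_Ioi]
    refine Eventually.of_forall fun x hx => ?_
    rw [Real.norm_eq_abs, Real.norm_eq_abs,
      abs_of_nonneg (mul_nonneg (hf0 x) (Real.exp_pos _).le), abs_of_nonneg (Real.exp_pos _).le]
    calc f x * rexp (c * x) ≤ rexp (-(2 * b * x)) * rexp (c * x) :=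
          mul_le_mul_of_nonneg_right (hdecay x (le_of_lt hx)) (Real.exp_pos _).le
      _ = rexp ((c - 2 * b) * x) := by rw [← Real.exp_add]; ring_nf
  have hgInt : Integrable (fun x => f x * rexp (c * x)) volume := by
    rw [← integrableOn_univ, ← Set.Iic_union_Ioi (a := (0 : ℝ))]
    exact hIntIic.union hIntIoi
  -- positivity
  set K : ℕ → Set Ω := fun n => {ω | ∀ s ∈ Icc (0 : ℝ) S, W s ω - b * s > -(n : ℝ)} with hKdef
  have hKmono : Monotone K := by
    intro n n' h ω hω s hs
    refine lt_of_le_of_lt ?_ (hω s hs)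
    exact neg_le_neg (Nat.cast_le.mpr h)
  have hKcover : ∀ᵐ ω ∂(ℙ : Measure Ω), ω ∈ ⋃ n, K n := by
    filter_upwards [hW.cont] with ω hcont
    have hgc : Continuous fun u => W u ω - b * u :=
      hcont.sub (continuous_const.mul continuous_id)
    have hne : (Icc (0 : ℝ) S).Nonempty := ⟨0, left_mem_Icc.mpr hS⟩
    obtain ⟨u, hu, hmin⟩ := isCompact_Icc.exists_isMinOn hne hgc.continuousOn
    obtain ⟨n, hn⟩ := exists_nat_gt (-(W u ω - b * u))
    refine Set.mem_iUnion.mpr ⟨n, fun s hs => ?_⟩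
    have h1 : W u ω - b * u ≤ W s ω - b * s := hmin hs
    linarith
  have hU1 : ℙ (⋃ n, K n) = 1 := by
    have hUc : ℙ (⋃ n, K n)ᶜ = 0 := by
      rw [ae_iff] at hKcover
      simpa [Set.compl_def] using hKcover
    rw [measure_congr (ae_eq_univ.mpr hUc), measure_univ]
  obtain ⟨n, hn⟩ : ∃ n : ℕ, (1 : ℝ≥0∞) / 2 < ℙ (K n) := by
    have h2 : (1 : ℝ≥0∞) / 2 < ⨆ n, ℙ (K n) := by
      rw [← hKmono.measure_iUnion, hU1]
      exact ENNReal.half_lt_self one_ne_zero ENNReal.one_ne_top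
    exact lt_iSup_iff.mp h2
  have hKE : K n ⊆ {ω : Ω | ∃ t' : ℝ, 0 ≤ t' ∧
      ∀ t ∈ Icc t' (t' + S), W t ω - b * t > -(n : ℝ)} := by
    intro ω hω
    refine ⟨0, le_refl 0, fun s hs => ?_⟩
    exact hω s (by rwa [zero_add] at hs)
  have hfn : (1 : ℝ) / 2 < f (-(n : ℝ)) := by
    have h3 : (1 : ℝ≥0∞) / 2 < ℙ {ω : Ω | ∃ t' : ℝ, 0 ≤ t' ∧
        ∀ t ∈ Icc t' (t' + S), W t ω - b * t > -(n : ℝ)} :=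
      lt_of_lt_of_le hn (measure_mono hKE)
    have h4 := ENNReal.toReal_strict_mono (measure_ne_top _ _) h3
    calc (1 : ℝ) / 2 = ((1 : ℝ≥0∞) / 2).toReal := by
          rw [ENNReal.toReal_div, ENNReal.toReal_one]; norm_num
      _ < f (-(n : ℝ)) := h4
  have hpos : ∀ x ∈ Iic (-(n : ℝ)), 0 < f x * rexp (c * x) := by
    intro x hx
    have : 0 < f x := lt_of_lt_of_le (lt_of_lt_of_le one_half_pos hfn.le) (hanti hx)
    exact mul_pos this (Real.exp_pos _)
  have hnonneg : 0 ≤ᵐ[volume] fun x => f x * rexp (c * x) :=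
    Eventually.of_forall fun x => mul_nonneg (hf0 x) (Real.exp_pos _).le
  refine ⟨hgInt, ?_⟩
  rw [integral_pos_iff_support_of_nonneg_ae hnonneg hgInt]
  refine lt_of_lt_of_le ?_ (measure_mono (fun x hx => ne_of_gt (hpos x hx)))
  rw [Real.volume_Iic]
  exact ENNReal.zero_lt_top
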